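/- Let H be a 5-uniform hypergraph on a finite vertex set V with n = |V| ≥ 5 vertices, given by a finite nonempty family (e_i)_{i∈I} of 5-element subsets of V (repeats allowed). If H is 2-colorable, then its average degree d̄ = 5|I|/n satisfies d̄ ≤ −(5/2)·λ_min − (5(n−1)/12)·λ^(2)_min, where λ_min is the smallest eigenvalue of the underlying graph adjacency matrix of H and λ^(2)_min is the smallest eigenvalue of the 2-subset graph adjacency matrix of H. -/

import Mathlib

open Finset

/-- The underlying graph adjacency matrix of a hypergraph given by the family of hyperedges
`e : I → Finset V`: the entry at `(u, v)` with `u ≠ v` is the number of hyperedges containing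
both `u` and `v`, and the diagonal is zero. -/
def underlyingAdj {V I : Type*} [Fintype I] [DecidableEq V] (e : I → Finset V) :
    Matrix V V ℝ := fun u v =>
  if u = v then 0 else ((Finset.univ.filter fun i => u ∈ e i ∧ v ∈ e i).card : ℝ)

lemma underlyingAdj_isHermitian {V I : Type*} [Fintype I] [DecidableEq V] (e : I → Finset V) :
    (underlyingAdj e).IsHermitian := by
  rw [Matrix.IsHermitian, Matrix.conjTranspose_eq_transpose_of_trivial]
  apply Matrix.IsSymm.ext
  intro i j
  simp only [underlyingAdj, eq_comm (a := j) (b := i)]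
  rcases eq_or_ne i j with h | h
  · simp [h]
  · simp only [if_neg h, if_neg h]
    congr 2
    apply Finset.filter_congr
    intro x _
    simp [and_comm]

/-- The 2-subset graph adjacency matrix of a hypergraph given by the family of hyperedges
`e : I → Finset V`: it is indexed by the 2-element subsets of `V`; the entry at `(S, T)` is the
number of hyperedges containing `S ∪ T` when `S` and `T` are disjoint, and `0` otherwise. -/
def twoSubsetAdj {V I : Type*} [Fintype V] [Fintype I] [DecidableEq V] (e : I → Finset V) :
    Matrix {S : Finset V // S.card = 2} {S : Finset V // S.card = 2} ℝ := fun S T =>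
  if Disjoint S.1 T.1 then ((Finset.univ.filter fun i => S.1 ∪ T.1 ⊆ e i).card : ℝ) else 0

lemma twoSubsetAdj_isHermitian {V I : Type*} [Fintype V] [Fintype I] [DecidableEq V]
    (e : I → Finset V) : (twoSubsetAdj e).IsHermitian := by
  rw [Matrix.IsHermitian, Matrix.conjTranspose_eq_transpose_of_trivial]
  apply Matrix.IsSymm.ext
  intro S T
  simp only [twoSubsetAdj, disjoint_comm, Finset.union_comm]


section Helpers
open Matrix

lemma rayleigh_min {n : Type*} [Fintype n] [DecidableEq n] [Nonempty n]
    {A : Matrix n n ℝ} (hA : A.IsHermitian) (x : n → ℝ) :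
    (⨅ i, hA.eigenvalues i) * (x ⬝ᵥ x) ≤ x ⬝ᵥ (A *ᵥ x) := by
  set U : Matrix n n ℝ := (hA.eigenvectorUnitary : Matrix n n ℝ) with hU
  set z : n → ℝ := x ᵥ* U with hz
  have hUU : U * star U = 1 := (Matrix.mem_unitaryGroup_iff).mp hA.eigenvectorUnitary.2
  have hdiag : star U = Uᵀ := by
    rw [Matrix.star_eq_conjTranspose, Matrix.conjTranspose_eq_transpose_of_trivial]
  have hzx : star U *ᵥ x = z := by rw [hdiag, Matrix.mulVec_transpose, hz]
  have hrhs : x ⬝ᵥ (A *ᵥ x) = ∑ i, hA.eigenvalues i * (z i * z i) := by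
    conv_lhs => rw [hA.spectral_theorem, Unitary.conjStarAlgAut_apply]
    rw [← hU, ← Matrix.mulVec_mulVec, ← Matrix.mulVec_mulVec, Matrix.dotProduct_mulVec, hzx]
    simp only [dotProduct, Matrix.mulVec_diagonal, Function.comp_apply]
    exact Finset.sum_congr rfl fun i _ => by simp [RCLike.ofReal]; ring
  have hnorm : x ⬝ᵥ x = ∑ i, z i * z i := by
    have h1 : z ⬝ᵥ z = x ⬝ᵥ x := by
      rw [← hzx, Matrix.dotProduct_mulVec, ← Matrix.mulVec_transpose, hdiag,
        Matrix.transpose_transpose, Matrix.mulVec_mulVec, ← hdiag, hUU, Matrix.one_mulVec]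
    rw [← h1]; rfl
  rw [hrhs, hnorm, Finset.mul_sum]
  apply Finset.sum_le_sum
  intro i _
  have h2 : (0:ℝ) ≤ z i * z i := mul_self_nonneg _
  have h3 : (⨅ j, hA.eigenvalues j) ≤ hA.eigenvalues i :=
    ciInf_le (Set.Finite.bddBelow (Set.finite_range _)) i
  exact mul_le_mul_of_nonneg_right h3 h2

lemma sum_offDiag' {α M : Type*} [DecidableEq α] [AddCommMonoid M] (s : Finset α)
    (f : α × α → M) :
    ∑ p ∈ s.offDiag, f p = ∑ u ∈ s, ∑ v ∈ s, if u = v then 0 else f (u, v) := by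
  have h : s.offDiag = (s ×ˢ s).filter (fun p => ¬ p.1 = p.2) := by
    ext p; simp [Finset.mem_offDiag, Finset.mem_product, and_assoc]
  rw [h, Finset.sum_filter, ← Finset.sum_product']
  exact Finset.sum_congr rfl fun p _ => by rw [ite_not]

lemma sum_offDiag_mul {V : Type*} [DecidableEq V] (E : Finset V) (A B : V → ℝ) :
    ∑ u ∈ E, ∑ v ∈ E, (if u = v then 0 else A u * B v)
      = (∑ u ∈ E, A u) * (∑ v ∈ E, B v) - ∑ u ∈ E, A u * B u := by
  rw [Finset.sum_mul_sum, ← Finset.sum_sub_distrib]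
  refine Finset.sum_congr rfl fun u hu => ?_
  have h1 : ∑ v ∈ E, (if u = v then 0 else A u * B v)
      = ∑ v ∈ E, (A u * B v - if u = v then A u * B v else 0) := by
    refine Finset.sum_congr rfl fun v _ => by split_ifs <;> ring
  rw [h1, Finset.sum_sub_distrib, Finset.sum_ite_eq, if_pos hu]

lemma sum_offDiag_sub {V : Type*} [DecidableEq V] (E : Finset V) (F : V → V → ℝ) :
    ∑ u ∈ E, ∑ v ∈ E, (if u = v then 0 else F u v)
      = (∑ u ∈ E, ∑ v ∈ E, F u v) - ∑ u ∈ E, F u u := by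
  rw [← Finset.sum_sub_distrib]
  refine Finset.sum_congr rfl fun u hu => ?_
  have h1 : ∑ v ∈ E, (if u = v then 0 else F u v)
      = ∑ v ∈ E, (F u v - if u = v then F u v else 0) := by
    refine Finset.sum_congr rfl fun v _ => by split_ifs <;> ring
  rw [h1, Finset.sum_sub_distrib, Finset.sum_ite_eq, if_pos hu]

lemma pair_ite_split {V : Type*} [DecidableEq V] {u v : V} (huv : u ≠ v) (c : V → ℝ) (w : V) :
    (if w = u ∨ w = v then c w else 0)
      = (if w = u then c w else 0) + (if w = v then c w else 0) := by
  by_cases h1 : w = u <;> by_cases h2 : w = v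
  · exact absurd (h1.symm.trans h2) huv
  all_goals simp [h1, h2, huv, huv.symm]

lemma sum_two_subsets {V : Type*} [Fintype V] [DecidableEq V] (f : Finset V → ℝ) :
    ∑ S : {S : Finset V // S.card = 2}, f S.1
      = (∑ p ∈ (Finset.univ : Finset V).offDiag, f {p.1, p.2}) / 2 := by
  have key : ∑ p ∈ (Finset.univ : Finset V).offDiag, f {p.1, p.2}
      = ∑ S ∈ (Finset.univ : Finset V).powersetCard 2, 2 * f S := by
    rw [← Finset.sum_fiberwise_of_maps_to (g := fun p : V × V => ({p.1, p.2} : Finset V))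
      (t := (Finset.univ : Finset V).powersetCard 2) ?_ (fun p => f {p.1, p.2})]
    · refine Finset.sum_congr rfl fun S hS => ?_
      obtain ⟨a, b, hab, rfl⟩ := Finset.card_eq_two.mp (Finset.mem_powersetCard_univ.mp hS)
      have hfib : (Finset.univ : Finset V).offDiag.filter
          (fun p : V × V => ({p.1, p.2} : Finset V) = {a, b}) = {(a, b), (b, a)} := by
        ext p
        simp only [Finset.mem_filter, Finset.mem_offDiag, Finset.mem_univ, true_and,
          Finset.mem_insert, Finset.mem_singleton]
        constructor
        · rintro ⟨hne, hp⟩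
          have h1 : p.1 ∈ ({a, b} : Finset V) := by
            rw [← hp]; exact Finset.mem_insert_self _ _
          have h2 : p.2 ∈ ({a, b} : Finset V) := by
            rw [← hp]; exact Finset.mem_insert_of_mem (Finset.mem_singleton_self _)
          simp only [Finset.mem_insert, Finset.mem_singleton] at h1 h2
          rcases h1 with h1 | h1 <;> rcases h2 with h2 | h2
          · exact absurd (h1.trans h2.symm) hne
          · left; exact Prod.ext h1 h2
          · right; exact Prod.ext h1 h2
          · exact absurd (h1.trans h2.symm) hne
        · rintro (rfl | rfl)
          · exact ⟨hab, rfl⟩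
          · exact ⟨hab.symm, by rw [Finset.pair_comm]⟩
      rw [hfib]
      have hcard : ((a, b) : V × V) ≠ (b, a) := by
        simp [Prod.ext_iff]; intro h; exact absurd h hab
      rw [Finset.sum_insert (by simp [hcard]), Finset.sum_singleton]
      rw [Finset.pair_comm b a]
      ring
    · intro p hp
      rw [Finset.mem_powersetCard_univ]
      exact Finset.card_pair (Finset.mem_offDiag.mp hp).2.2
  rw [key, ← Finset.sum_subtype ((Finset.univ : Finset V).powersetCard 2)
    (fun S => Finset.mem_powersetCard_univ) (fun S => f S)]
  rw [← Finset.mul_sum, mul_div_cancel_left₀ _ (two_ne_zero)]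

lemma inner_B {V : Type*} [DecidableEq V] (E : Finset V) (hE : E.card = 5) (x : V → ℝ)
    (hx : ∀ v, x v * x v = 1) (u v : V) (hu : u ∈ E) (hv : v ∈ E) (huv : u ≠ v) :
    ∑ q ∈ E.offDiag, (if q.1 ≠ u ∧ q.1 ≠ v ∧ q.2 ≠ u ∧ q.2 ≠ v then x q.1 * x q.2 else 0)
      = ((∑ w ∈ E, x w) - x u - x v) ^ 2 - 3 := by
  set A : V → ℝ := fun w => if w = u ∨ w = v then 0 else x w with hA
  have h1 : ∑ q ∈ E.offDiag, (if q.1 ≠ u ∧ q.1 ≠ v ∧ q.2 ≠ u ∧ q.2 ≠ v then x q.1 * x q.2 else 0)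
      = ∑ w ∈ E, ∑ z ∈ E, (if w = z then 0 else A w * A z) := by
    rw [sum_offDiag']
    refine Finset.sum_congr rfl fun w _ => Finset.sum_congr rfl fun z _ => ?_
    by_cases hwz : w = z
    · simp [hwz]
    · rw [if_neg hwz]
      by_cases hw : w = u ∨ w = v
      · have hc : ¬(w ≠ u ∧ w ≠ v ∧ z ≠ u ∧ z ≠ v) := by tauto
        simp [hA, hw, hc]
      · by_cases hz : z = u ∨ z = v
        · have hc : ¬(w ≠ u ∧ w ≠ v ∧ z ≠ u ∧ z ≠ v) := by tauto
          simp [hA, hw, hz, hc]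
        · have hc : w ≠ u ∧ w ≠ v ∧ z ≠ u ∧ z ≠ v := by tauto
          simp [hA, hw, hz, hc, hwz]
  have hAsum : ∑ w ∈ E, A w = (∑ w ∈ E, x w) - x u - x v := by
    have : ∀ w ∈ E, A w = x w - ((if w = u then x w else 0) + (if w = v then x w else 0)) := by
      intro w _
      rw [← pair_ite_split huv x w]
      by_cases h : w = u ∨ w = v <;> simp [hA, h]
    rw [Finset.sum_congr rfl this, Finset.sum_sub_distrib, Finset.sum_add_distrib,
      Finset.sum_ite_eq', Finset.sum_ite_eq', if_pos hu, if_pos hv]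
    ring
  have hAdiag : ∑ w ∈ E, A w * A w = 3 := by
    have : ∀ w ∈ E, A w * A w
        = 1 - ((if w = u then (1:ℝ) else 0) + (if w = v then (1:ℝ) else 0)) := by
      intro w _
      rw [← pair_ite_split huv (fun _ => (1:ℝ)) w]
      by_cases h : w = u ∨ w = v <;> simp [hA, h, hx w]
    rw [Finset.sum_congr rfl this, Finset.sum_sub_distrib, Finset.sum_add_distrib,
      Finset.sum_ite_eq', Finset.sum_ite_eq', if_pos hu, if_pos hv, Finset.sum_const, hE]
    norm_num
  rw [h1, sum_offDiag_mul, hAsum, hAdiag]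
  ring

lemma per_edge_B {V : Type*} [DecidableEq V] (E : Finset V) (hE : E.card = 5) (x : V → ℝ)
    (hx : ∀ v, x v * x v = 1) :
    ∑ p ∈ E.offDiag, ∑ q ∈ E.offDiag,
      (if q.1 ≠ p.1 ∧ q.1 ≠ p.2 ∧ q.2 ≠ p.1 ∧ q.2 ≠ p.2
        then x p.1 * x p.2 * (x q.1 * x q.2) else 0)
      = (∑ w ∈ E, x w) ^ 4 - 22 * (∑ w ∈ E, x w) ^ 2 + 45 := by
  set s : ℝ := ∑ w ∈ E, x w with hs
  have hinner : ∀ p ∈ E.offDiag, ∑ q ∈ E.offDiag,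
      (if q.1 ≠ p.1 ∧ q.1 ≠ p.2 ∧ q.2 ≠ p.1 ∧ q.2 ≠ p.2
        then x p.1 * x p.2 * (x q.1 * x q.2) else 0)
      = x p.1 * x p.2 * ((s - x p.1 - x p.2) ^ 2 - 3) := by
    intro p hp
    obtain ⟨h1, h2, h3⟩ := Finset.mem_offDiag.mp hp
    rw [← inner_B E hE x hx p.1 p.2 h1 h2 h3, Finset.mul_sum]
    refine Finset.sum_congr rfl fun q _ => ?_
    split_ifs <;> ring
  rw [Finset.sum_congr rfl hinner, sum_offDiag']
  have hterm : ∀ u ∈ E, ∀ v ∈ E,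
      (if u = v then 0 else x u * x v * ((s - x u - x v) ^ 2 - 3))
      = (if u = v then 0
          else (s ^ 2 - 1) * (x u * x v) + (-(2 * s)) * x u + ((-(2 * s)) * x v + 2)) := by
    intro u _ v _
    split_ifs with h
    · rfl
    · linear_combination (x u * x v - 2 * s * x v + 2 * (x v * x v)) * hx u
        + (x u * x v - 2 * s * x u + 2) * hx v
  rw [Finset.sum_congr rfl fun u hu => Finset.sum_congr rfl fun v hv => hterm u hu v hv,
    sum_offDiag_sub]
  have hxx : ∑ u ∈ E, x u * x u = 5 := by
    rw [Finset.sum_congr rfl fun u _ => hx u, Finset.sum_const, hE]; norm_num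
  simp only [Finset.sum_add_distrib, ← Finset.mul_sum, ← Finset.sum_mul, Finset.sum_const, hE,
    nsmul_eq_mul, hxx, ← hs]
  ring

lemma sum_swap3 {α β γ : Type*} [Fintype α] [Fintype β] [Fintype γ] (F : α → β → γ → ℝ) :
    ∑ a, ∑ b, ∑ c, F a b c = ∑ c, ∑ a, ∑ b, F a b c := by
  trans (∑ a, ∑ c, ∑ b, F a b c)
  · exact Finset.sum_congr rfl fun a _ => Finset.sum_comm
  · exact Finset.sum_comm

end Helpers

open Matrix

/-- If a 5-uniform hypergraph `H` on a finite vertex set with `n = |V| ≥ 5` vertices, given by a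
nonempty family `(e i)_{i : I}` of 5-element subsets, is 2-colorable, then its average degree
`d̄ = 5|I|/n` satisfies `d̄ ≤ -(5/2)·λ_min - (5(n-1)/12)·λ⁽²⁾_min`, where `λ_min` and `λ⁽²⁾_min`
are the smallest eigenvalues of the underlying graph and the 2-subset graph adjacency
matrices. -/
theorem fiveUniform_two_colorable {V I : Type*} [Fintype V] [DecidableEq V]
    [Fintype I] [Nonempty I] (hn : 5 ≤ Fintype.card V)
    (e : I → Finset V) (he : ∀ i, (e i).card = 5)
    (hcol : ∃ g : V → Bool, ∀ i, ∃ u ∈ e i, ∃ v ∈ e i, g u ≠ g v) :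
    (5 * Fintype.card I : ℝ) / (Fintype.card V : ℝ) ≤
      -(5 / 2) * (⨅ v, (underlyingAdj_isHermitian e).eigenvalues v) -
        5 * ((Fintype.card V : ℝ) - 1) / 12 * ⨅ S, (twoSubsetAdj_isHermitian e).eigenvalues S := by
  classical
  obtain ⟨g, hg⟩ := hcol
  haveI hVne : Nonempty V := Fintype.card_pos_iff.mp (by omega)
  haveI hSne : Nonempty {S : Finset V // S.card = 2} := by
    rw [← Fintype.card_pos_iff, Fintype.card_finset_len]
    exact Nat.choose_pos (by omega)
  set x : V → ℝ := fun v => if g v then 1 else -1 with hxdef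
  have hxsq : ∀ v, x v * x v = 1 := by
    intro v; by_cases h : g v <;> simp [hxdef, h]
  set y : {S : Finset V // S.card = 2} → ℝ := fun S => ∏ v ∈ S.1, x v with hydef
  -- the per-edge signed sums take square value 1 or 9
  have hsval : ∀ i, (∑ v ∈ e i, x v) ^ 2 = 1 ∨ (∑ v ∈ e i, x v) ^ 2 = 9 := by
    intro i
    obtain ⟨u, hu, v, hv, huv⟩ := hg i
    have hab : ∃ a ∈ e i, ∃ b ∈ e i, g a = true ∧ g b = false := by
      cases hgu : g u <;> cases hgv : g v
      · rw [hgu, hgv] at huv; exact absurd rfl huv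
      · exact ⟨v, hv, u, hu, hgv, hgu⟩
      · exact ⟨u, hu, v, hv, hgu, hgv⟩
      · rw [hgu, hgv] at huv; exact absurd rfl huv
    obtain ⟨a, ha, b, hb, hga, hgb⟩ := hab
    set k : ℕ := ((e i).filter fun w => g w = true).card with hk
    clear_value k
    have hck : k + ((e i).filter fun w => ¬ g w = true).card = 5 := by
      rw [hk, Finset.card_filter_add_card_filter_not, he i]
    have hsum : ∑ v ∈ e i, x v = 2 * (k:ℝ) - 5 := by
      have hsplit := Finset.sum_filter_add_sum_filter_not (e i) (fun w => g w = true) x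
      have hA : ∑ w ∈ (e i).filter (fun w => g w = true), x w = (k:ℝ) := by
        rw [Finset.sum_congr rfl (fun w hw => show x w = 1 by
          simp [hxdef, (Finset.mem_filter.mp hw).2]), Finset.sum_const, hk,
          nsmul_eq_mul, mul_one]
      have hB : ∑ w ∈ (e i).filter (fun w => ¬ g w = true), x w = -((5:ℝ) - (k:ℝ)) := by
        rw [Finset.sum_congr rfl (fun w hw => show x w = -1 by
          simp [hxdef, (Finset.mem_filter.mp hw).2]), Finset.sum_const]
        have : (((e i).filter fun w => ¬ g w = true).card : ℝ) = 5 - (k:ℝ) := by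
          have h5 : ((e i).filter fun w => ¬ g w = true).card = 5 - k := by omega
          rw [h5, Nat.cast_sub (by omega : k ≤ 5)]
          norm_num
        rw [nsmul_eq_mul, this]
        ring
      rw [← hsplit, hA, hB]
      ring
    have hk1 : 1 ≤ k := by
      rw [hk]
      exact Finset.card_pos.mpr ⟨a, Finset.mem_filter.mpr ⟨ha, hga⟩⟩
    have hk4 : k ≤ 4 := by
      have hsub : (e i).filter (fun w => g w = true) ⊆ (e i).erase b := by
        intro w hw
        obtain ⟨hw1, hw2⟩ := Finset.mem_filter.mp hw
        refine Finset.mem_erase.mpr ⟨fun h => ?_, hw1⟩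
        rw [h, hgb] at hw2; cases hw2
      rw [hk]
      calc ((e i).filter fun w => g w = true).card ≤ ((e i).erase b).card :=
            Finset.card_le_card hsub
        _ = 4 := by rw [Finset.card_erase_of_mem hb, he i]
    interval_cases k <;> rw [hsum] <;> norm_num
  -- norms
  have hF2 : x ⬝ᵥ x = (Fintype.card V : ℝ) := by
    simp only [dotProduct]
    rw [Finset.sum_congr rfl fun v _ => hxsq v, Finset.sum_const, Finset.card_univ,
      nsmul_eq_mul, mul_one]
  have hF4 : y ⬝ᵥ y = (Fintype.card V : ℝ) * ((Fintype.card V : ℝ) - 1) / 2 := by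
    have h1 : ∀ S : {S : Finset V // S.card = 2}, y S * y S = 1 := by
      intro S
      rw [hydef]
      simp only
      rw [← Finset.prod_mul_distrib, Finset.prod_congr rfl fun v _ => hxsq v]
      exact Finset.prod_const_one
    simp only [dotProduct]
    rw [Finset.sum_congr rfl fun S _ => h1 S, Finset.sum_const, Finset.card_univ,
      Fintype.card_finset_len, nsmul_eq_mul, mul_one, Nat.cast_choose_two]
  -- quadratic form of the underlying adjacency matrix
  have hF1 : x ⬝ᵥ ((underlyingAdj e) *ᵥ x) = ∑ i, ((∑ v ∈ e i, x v) ^ 2 - 5) := by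
    have step1 : x ⬝ᵥ ((underlyingAdj e) *ᵥ x)
        = ∑ u, ∑ v, ∑ i, (if u ∈ e i ∧ v ∈ e i then (if u = v then 0 else x u * x v) else 0) := by
      simp only [dotProduct, Matrix.mulVec, underlyingAdj]
      refine Finset.sum_congr rfl fun u _ => ?_
      rw [Finset.mul_sum]
      refine Finset.sum_congr rfl fun v _ => ?_
      by_cases h : u = v
      · simp [h]
      · rw [if_neg h, Finset.card_filter]
        push_cast
        rw [Finset.sum_mul, Finset.mul_sum]
        refine Finset.sum_congr rfl fun i _ => ?_
        split_ifs with h2 h3 <;> first | ring | tauto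
    rw [step1, sum_swap3]
    refine Finset.sum_congr rfl fun i _ => ?_
    have r1 : ∑ u : V, ∑ v : V,
        (if u ∈ e i ∧ v ∈ e i then (if u = v then 0 else x u * x v) else 0)
        = ∑ u ∈ e i, ∑ v ∈ e i, (if u = v then 0 else x u * x v) := by
      rw [← Finset.sum_subset (Finset.subset_univ (e i)) (fun u _ hu => ?_)]
      · refine Finset.sum_congr rfl fun u hu => ?_
        rw [← Finset.sum_subset (Finset.subset_univ (e i)) (fun v _ hv => ?_)]
        · exact Finset.sum_congr rfl fun v hv => by rw [if_pos ⟨hu, hv⟩]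
        · exact if_neg (fun hc => hv hc.2)
      · exact Finset.sum_eq_zero fun v _ => if_neg (fun hc => hu hc.1)
    rw [r1, sum_offDiag_mul]
    have hxx : ∑ u ∈ e i, x u * x u = 5 := by
      rw [Finset.sum_congr rfl fun u _ => hxsq u, Finset.sum_const, he i]; norm_num
    rw [hxx]
    ring
  -- quadratic form of the 2-subset adjacency matrix
  have hF3 : y ⬝ᵥ ((twoSubsetAdj e) *ᵥ y)
      = ∑ i, (((∑ v ∈ e i, x v) ^ 4 - 22 * (∑ v ∈ e i, x v) ^ 2 + 45) / 4) := by
    have step1 : y ⬝ᵥ ((twoSubsetAdj e) *ᵥ y)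
        = ∑ S : {S : Finset V // S.card = 2}, ∑ T : {S : Finset V // S.card = 2}, ∑ i,
            (if Disjoint S.1 T.1 ∧ S.1 ∪ T.1 ⊆ e i
              then (∏ v ∈ S.1, x v) * ∏ v ∈ T.1, x v else 0) := by
      simp only [dotProduct, Matrix.mulVec, twoSubsetAdj, hydef]
      refine Finset.sum_congr rfl fun S _ => ?_
      rw [Finset.mul_sum]
      refine Finset.sum_congr rfl fun T _ => ?_
      by_cases hd : Disjoint S.1 T.1
      · rw [if_pos hd, Finset.card_filter]
        push_cast
        rw [Finset.sum_mul, Finset.mul_sum]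
        refine Finset.sum_congr rfl fun i _ => ?_
        by_cases hsub : S.1 ∪ T.1 ⊆ e i <;> simp [hd, hsub, mul_comm, mul_assoc, mul_left_comm]
      · rw [if_neg hd, Finset.sum_eq_zero fun i _ => if_neg (fun hc => hd hc.1)]
        ring
    rw [step1, sum_swap3]
    refine Finset.sum_congr rfl fun i _ => ?_
    set G : Finset V → Finset V → ℝ := fun S T =>
      (if Disjoint S T ∧ S ∪ T ⊆ e i then (∏ v ∈ S, x v) * ∏ v ∈ T, x v else 0) with hG
    have h1 : ∑ S : {S : Finset V // S.card = 2}, ∑ T : {S : Finset V // S.card = 2}, G S.1 T.1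
        = (∑ p ∈ (Finset.univ : Finset V).offDiag,
            ∑ T : {S : Finset V // S.card = 2}, G {p.1, p.2} T.1) / 2 :=
      sum_two_subsets (fun A => ∑ T : {S : Finset V // S.card = 2}, G A T.1)
    have h2 : ∀ p : V × V, ∑ T : {S : Finset V // S.card = 2}, G {p.1, p.2} T.1
        = (∑ q ∈ (Finset.univ : Finset V).offDiag, G {p.1, p.2} {q.1, q.2}) / 2 :=
      fun p => sum_two_subsets (fun B => G {p.1, p.2} B)
    rw [h1, Finset.sum_congr rfl fun p _ => h2 p, ← Finset.sum_div]
    have hsubset : (e i).offDiag ⊆ (Finset.univ : Finset V).offDiag := by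
      intro p hp
      obtain ⟨hp1, hp2, hp3⟩ := Finset.mem_offDiag.mp hp
      exact Finset.mem_offDiag.mpr ⟨Finset.mem_univ _, Finset.mem_univ _, hp3⟩
    have hvan : ∀ (p q : V × V), (p.1 ∉ e i ∨ p.2 ∉ e i ∨ q.1 ∉ e i ∨ q.2 ∉ e i) →
        G {p.1, p.2} {q.1, q.2} = 0 := by
      intro p q hout
      simp only [hG]
      refine if_neg (fun hc => ?_)
      have hsub := hc.2
      rcases hout with h | h | h | h
      · exact h (hsub (Finset.mem_union_left _ (Finset.mem_insert_self _ _)))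
      · exact h (hsub (Finset.mem_union_left _
          (Finset.mem_insert_of_mem (Finset.mem_singleton_self _))))
      · exact h (hsub (Finset.mem_union_right _ (Finset.mem_insert_self _ _)))
      · exact h (hsub (Finset.mem_union_right _
          (Finset.mem_insert_of_mem (Finset.mem_singleton_self _))))
    have h3 : ∑ p ∈ (Finset.univ : Finset V).offDiag,
        ∑ q ∈ (Finset.univ : Finset V).offDiag, G {p.1, p.2} {q.1, q.2}
        = ∑ p ∈ (e i).offDiag, ∑ q ∈ (e i).offDiag, G {p.1, p.2} {q.1, q.2} := by
      rw [← Finset.sum_subset hsubset (fun p hp hpo => ?_)]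
      · refine Finset.sum_congr rfl fun p hp => ?_
        rw [← Finset.sum_subset hsubset (fun q hq hqo => ?_)]
        have hq1 : q.1 ∉ e i ∨ q.2 ∉ e i := by
          by_contra hcon
          push_neg at hcon
          exact hqo (Finset.mem_offDiag.mpr ⟨hcon.1, hcon.2, (Finset.mem_offDiag.mp hq).2.2⟩)
        rcases hq1 with h | h
        · exact hvan p q (Or.inr (Or.inr (Or.inl h)))
        · exact hvan p q (Or.inr (Or.inr (Or.inr h)))
      · have hp1 : p.1 ∉ e i ∨ p.2 ∉ e i := by
          by_contra hcon
          push_neg at hcon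
          exact hpo (Finset.mem_offDiag.mpr ⟨hcon.1, hcon.2, (Finset.mem_offDiag.mp hp).2.2⟩)
        refine Finset.sum_eq_zero fun q _ => ?_
        rcases hp1 with h | h
        · exact hvan p q (Or.inl h)
        · exact hvan p q (Or.inr (Or.inl h))
    have h4 : ∀ p ∈ (e i).offDiag, ∀ q ∈ (e i).offDiag,
        G {p.1, p.2} {q.1, q.2}
        = (if q.1 ≠ p.1 ∧ q.1 ≠ p.2 ∧ q.2 ≠ p.1 ∧ q.2 ≠ p.2
            then x p.1 * x p.2 * (x q.1 * x q.2) else 0) := by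
      intro p hp q hq
      obtain ⟨hp1, hp2, hp3⟩ := Finset.mem_offDiag.mp hp
      obtain ⟨hq1, hq2, hq3⟩ := Finset.mem_offDiag.mp hq
      simp only [hG]
      by_cases hc : q.1 ≠ p.1 ∧ q.1 ≠ p.2 ∧ q.2 ≠ p.1 ∧ q.2 ≠ p.2
      · rw [if_pos hc, if_pos ?_]
        · rw [Finset.prod_pair hp3, Finset.prod_pair hq3]
        · constructor
          · rw [Finset.disjoint_left]
            intro w hw hw2
            simp only [Finset.mem_insert, Finset.mem_singleton] at hw hw2
            rcases hw with rfl | rfl <;> rcases hw2 with h | h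
            · exact hc.1 h.symm
            · exact hc.2.2.1 h.symm
            · exact hc.2.1 h.symm
            · exact hc.2.2.2 h.symm
          · simp only [Finset.union_subset_iff, Finset.insert_subset_iff,
              Finset.singleton_subset_iff]
            exact ⟨⟨hp1, hp2⟩, hq1, hq2⟩
      · rw [if_neg hc]
        refine if_neg (fun hcc => hc ?_)
        have hd := hcc.1
        refine ⟨fun h => ?_, fun h => ?_, fun h => ?_, fun h => ?_⟩
        · exact Finset.disjoint_left.mp hd (Finset.mem_insert_self _ _)
            (by rw [← h]; exact Finset.mem_insert_self _ _)
        · exact Finset.disjoint_left.mp hd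
            (Finset.mem_insert_of_mem (Finset.mem_singleton_self _))
            (by rw [← h]; exact Finset.mem_insert_self _ _)
        · exact Finset.disjoint_left.mp hd (Finset.mem_insert_self _ _)
            (by rw [← h]; exact Finset.mem_insert_of_mem (Finset.mem_singleton_self _))
        · exact Finset.disjoint_left.mp hd
            (Finset.mem_insert_of_mem (Finset.mem_singleton_self _))
            (by rw [← h]; exact Finset.mem_insert_of_mem (Finset.mem_singleton_self _))
    rw [h3, Finset.sum_congr rfl fun p hp => Finset.sum_congr rfl fun q hq => h4 p hp q hq,
      per_edge_B (e i) (he i) x hxsq]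
    ring
  -- assemble
  have hray1 := rayleigh_min (underlyingAdj_isHermitian e) x
  have hray2 := rayleigh_min (twoSubsetAdj_isHermitian e) y
  rw [hF2, hF1] at hray1
  rw [hF4, hF3] at hray2
  set c1 : ℝ := ⨅ v, (underlyingAdj_isHermitian e).eigenvalues v with hc1
  set c2 : ℝ := ⨅ S, (twoSubsetAdj_isHermitian e).eigenvalues S with hc2
  have hn' : (5:ℝ) ≤ (Fintype.card V : ℝ) := by exact_mod_cast hn
  have hnpos : (0:ℝ) < (Fintype.card V : ℝ) := by linarith
  rw [div_le_iff₀ hnpos]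
  have hcomb : -(5/2) * (∑ i, ((∑ v ∈ e i, x v) ^ 2 - 5))
      - 5/6 * (∑ i, (((∑ v ∈ e i, x v) ^ 4 - 22 * (∑ v ∈ e i, x v) ^ 2 + 45) / 4))
      = 5 * (Fintype.card I : ℝ) := by
    rw [Finset.mul_sum, Finset.mul_sum, ← Finset.sum_sub_distrib]
    rw [Finset.sum_congr rfl fun i _ => show
        -(5/2) * ((∑ v ∈ e i, x v) ^ 2 - 5)
          - 5/6 * (((∑ v ∈ e i, x v) ^ 4 - 22 * (∑ v ∈ e i, x v) ^ 2 + 45) / 4) = (5:ℝ) from by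
      rcases hsval i with h | h
      · linear_combination (-(5:ℝ)/24) * ((∑ v ∈ e i, x v) ^ 2 - 9) * h
      · linear_combination (-(5:ℝ)/24) * ((∑ v ∈ e i, x v) ^ 2 - 1) * h]
    rw [Finset.sum_const, Finset.card_univ, nsmul_eq_mul]
    ring
  have key : (-(5 / 2) * c1 - 5 * ((Fintype.card V : ℝ) - 1) / 12 * c2) * (Fintype.card V : ℝ)
      = -(5/2) * (c1 * (Fintype.card V : ℝ))
        - 5/6 * (c2 * ((Fintype.card V : ℝ) * ((Fintype.card V : ℝ) - 1) / 2)) := by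
    ring
  rw [key]
  linarith [hray1, hray2, hcomb]
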